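/- arXiv:1709.09853 — 3 statements merged into one kernel-verified Lean document; each statement's English description precedes it below -/
import Mathlib

section
/- If n is odd, then the coefficient of x in the characteristic polynomial of the adjacency matrix of the path P_n equals (n+1)/2; equivalently, the product of the n-1 nonzero eigenvalues of P_n equals (n+1)/2 up to sign as given by this coefficient. -/
open Polynomial Matrix

/-- Adjacency matrix of the path `P_n` on `n` vertices. -/
def pathAdj (n : ℕ) : Matrix (Fin n) (Fin n) ℝ :=
  Matrix.of fun i j => if (i : ℕ) + 1 = j ∨ (j : ℕ) + 1 = i then 1 else 0

/-- Tridiagonal characteristic matrix of the path. -/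
noncomputable def trid (n : ℕ) : Matrix (Fin n) (Fin n) (Polynomial ℝ) :=
  Matrix.of fun i j => if (i : ℕ) = j then Polynomial.X
    else if (i : ℕ) + 1 = j ∨ (j : ℕ) + 1 = i then -1 else 0

/-- Characteristic polynomials of paths, recursively. -/
noncomputable def q : ℕ → Polynomial ℝ
  | 0 => 1
  | 1 => Polynomial.X
  | (m+2) => Polynomial.X * q (m+1) - q m

lemma charmatrix_pathAdj (n : ℕ) : Matrix.charmatrix (pathAdj n) = trid n := by
  ext i j
  rcases eq_or_ne i j with h | h
  · subst h
    simp [Matrix.charmatrix_apply_eq, pathAdj, trid]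
  · have h' : (i : ℕ) ≠ j := fun hc => h (Fin.ext hc)
    simp only [Matrix.charmatrix_apply_ne _ _ _ h, pathAdj, trid, Matrix.of_apply, if_neg h']
    split <;> simp

lemma trid_apply (n : ℕ) (i j : Fin n) : trid n i j = if (i : ℕ) = j then Polynomial.X
    else if (i : ℕ) + 1 = j ∨ (j : ℕ) + 1 = i then -1 else 0 := rfl

lemma succAbove_one_zero (m : ℕ) : (1 : Fin (m+2)).succAbove 0 = 0 := rfl

lemma succAbove_one_succ (m : ℕ) (j : Fin m) :
    (1 : Fin (m+2)).succAbove j.succ = j.succ.succ :=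
  Fin.succAbove_of_le_castSucc _ _ (by
    simp [Fin.le_def, Fin.val_one])

lemma det_trid_rec (m : ℕ) :
    (trid (m + 2)).det = Polynomial.X * (trid (m + 1)).det - (trid m).det := by
  have hB : ∀ i j : Fin m,
      ((trid (m+2)).submatrix Fin.succ ((0 : Fin (m+1)).succ.succAbove)).submatrix
        Fin.succ Fin.succ i j = trid m i j := by
    intro i j
    have h1 : ((0 : Fin (m+1)).succ : Fin (m+2)) = 1 := rfl
    simp only [Matrix.submatrix_apply, h1, succAbove_one_succ, trid_apply, Fin.val_succ]
    exact if_congr (by omega) rfl (if_congr (by omega) rfl rfl)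
  have hA : (trid (m+2)).submatrix Fin.succ ((0 : Fin (m+2)).succAbove) = trid (m+1) := by
    refine Matrix.ext fun i j => ?_
    simp only [Matrix.submatrix_apply, Fin.succAbove_zero, trid_apply, Fin.val_succ]
    exact if_congr (by omega) rfl (if_congr (by omega) rfl rfl)
  rw [Matrix.det_succ_row_zero (trid (m+2)), Fin.sum_univ_succ, Fin.sum_univ_succ]
  have hz : ∀ j : Fin m, trid (m+2) 0 j.succ.succ = 0 := by
    intro j
    rw [trid_apply]
    rw [if_neg (by simp [Fin.val_succ]), if_neg (by simp [Fin.val_succ])]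
  have hsum0 : ∑ j : Fin m, (-1 : Polynomial ℝ) ^ ((j.succ.succ : Fin (m+2)) : ℕ) *
      trid (m+2) 0 j.succ.succ *
      ((trid (m+2)).submatrix Fin.succ (j.succ.succ.succAbove)).det = 0 := by
    apply Finset.sum_eq_zero
    intro j _
    rw [hz, mul_zero, zero_mul]
  rw [hsum0, add_zero, hA]
  have e00 : trid (m+2) 0 0 = Polynomial.X := rfl
  have e01 : trid (m+2) 0 (0 : Fin (m+1)).succ = -1 := by
    rw [trid_apply]
    norm_num
  rw [e00, e01]
  -- now compute the determinant of the second minor by expanding along its first column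
  set B := (trid (m+2)).submatrix Fin.succ ((0 : Fin (m+1)).succ.succAbove) with hBdef
  have hB0 : B 0 0 = -1 := by
    have : ((0 : Fin (m+1)).succ : Fin (m+2)).succAbove 0 = 0 := rfl
    simp only [hBdef, Matrix.submatrix_apply, this, trid_apply]
    norm_num
  have hBi : ∀ i : Fin m, B i.succ 0 = 0 := by
    intro i
    have : ((0 : Fin (m+1)).succ : Fin (m+2)).succAbove 0 = 0 := rfl
    simp only [hBdef, Matrix.submatrix_apply, this, trid_apply, Fin.val_succ, Fin.val_zero]
    have h1 : ¬ ((i : ℕ) + 1 + 1 = 0) := by omega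
    have h2 : ¬ ((i : ℕ) + 1 + 1 + 1 = 0 ∨ 0 + 1 = (i : ℕ) + 1 + 1) := by omega
    simp only [h1, h2, if_false]
  have hBdet : B.det = -(trid m).det := by
    rw [Matrix.det_succ_column_zero B, Fin.sum_univ_succ]
    have hzz : ∑ i : Fin m, (-1 : Polynomial ℝ) ^ ((i.succ : Fin (m+1)) : ℕ) * B i.succ 0 *
        (B.submatrix (i.succ.succAbove) Fin.succ).det = 0 := by
      apply Finset.sum_eq_zero
      intro i _
      rw [hBi, mul_zero, zero_mul]
    rw [hzz, add_zero, hB0]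
    have : B.submatrix ((0 : Fin (m+1)).succAbove) Fin.succ = trid m := by
      ext i j
      rw [← hB i j]
      simp [Fin.succAbove_zero]
    rw [this]
    simp
  rw [hBdet]
  simp [Fin.val_succ]
  ring

lemma det_trid (m : ℕ) : (trid m).det = q m := by
  induction m using Nat.twoStepInduction with
  | zero => simp [q, Matrix.det_fin_zero]
  | one => simp [q, Matrix.det_fin_one, trid_apply]
  | more m ih1 ih2 => rw [det_trid_rec, ih1, ih2]; rfl

lemma q_coeff0_even (k : ℕ) : (q (2*k)).coeff 0 = (-1 : ℝ)^k := by
  induction k with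
  | zero => simp [q]
  | succ k ih =>
    have h : 2*(k+1) = (2*k) + 2 := by ring
    rw [h, show q (2*k+2) = Polynomial.X * q (2*k+1) - q (2*k) from rfl]
    simp [Polynomial.mul_coeff_zero, ih, pow_succ]

lemma q_coeff1_odd (k : ℕ) : (q (2*k+1)).coeff 1 = (-1 : ℝ)^k * (k+1) := by
  induction k with
  | zero => simp [q]
  | succ k ih =>
    have h : 2*(k+1)+1 = (2*k+1) + 2 := by ring
    rw [h, show q (2*k+1+2) = Polynomial.X * q (2*k+2) - q (2*k+1) from rfl]
    rw [Polynomial.coeff_sub, Polynomial.coeff_X_mul,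
      show 2*k+2 = 2*(k+1) from by ring, q_coeff0_even, ih]
    push_cast
    ring

/-- For odd `n`, the coefficient of `x` in the characteristic polynomial of `P_n`
(the product of the `n-1` nonzero eigenvalues, up to the sign `(-1)^((n-1)/2)`)
equals `(n+1)/2`. -/
theorem charpoly_coeff_one_pathAdj_odd (n : ℕ) (hn : Odd n) :
    (pathAdj n).charpoly.coeff 1 = (-1 : ℝ) ^ ((n - 1) / 2) * (((n : ℝ) + 1) / 2) := by
  obtain ⟨k, hk⟩ := hn
  subst hk
  rw [Matrix.charpoly, charmatrix_pathAdj, det_trid, q_coeff1_odd]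
  have h1 : (2*k+1-1)/2 = k := by omega
  rw [h1]
  push_cast
  ring
end

section
/- Let B be a real symmetric n×n matrix whose first two rows (and columns) are equal, and let B' be the (n-1)×(n-1) matrix obtained from B by deleting the first row and column. Then det(B) = 0 and the coefficient of x in the characteristic polynomial of B equals, up to sign, 2·det(B'); more precisely, the multiset of eigenvalues of B is the multiset of eigenvalues of B'' together with 0, where det(B'') = 2·det(B'). -/
open Matrix Polynomial

section EigAux

/-- The change-of-basis matrix: columns `e₀ - e₁`, `(√2/2)(e₀+e₁)`, `e₂, …`. -/
noncomputable def Pmat (n : ℕ) : Matrix (Fin (n+2)) (Fin (n+2)) ℝ :=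
  Matrix.of fun i j =>
    if j = 0 then (if i = 0 then 1 else if i = 1 then -1 else 0)
    else if j = 1 then (if i = 0 then Real.sqrt 2 / 2 else if i = 1 then Real.sqrt 2 / 2 else 0)
    else if i = j then 1 else 0

/-- Explicit inverse of `Pmat`. -/
noncomputable def Pinv (n : ℕ) : Matrix (Fin (n+2)) (Fin (n+2)) ℝ :=
  Matrix.of fun i j =>
    if i = 0 then (if j = 0 then 1/2 else if j = 1 then -(1/2) else 0)
    else if i = 1 then (if j = 0 then Real.sqrt 2 / 2 else if j = 1 then Real.sqrt 2 / 2 else 0)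
    else if i = j then 1 else 0

/-- The target block-diagonal matrix `0 ⊕ B''`. -/
noncomputable def Dmat (n : ℕ) (B : Matrix (Fin (n+2)) (Fin (n+2)) ℝ) :
    Matrix (Fin (n+2)) (Fin (n+2)) ℝ :=
  Matrix.of fun i j =>
    Fin.cases 0 (fun i' => Fin.cases 0 (fun j' =>
      (if i' = 0 then Real.sqrt 2 else 1) * (if j' = 0 then Real.sqrt 2 else 1)
        * B i'.succ j'.succ) j) i

lemma ssne1 {m : ℕ} (k : Fin m) : (k.succ.succ : Fin (m+1+1)) ≠ 1 := by
  intro h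
  exact Fin.succ_ne_zero k (Fin.succ_injective _ (h.trans Fin.succ_zero_eq_one.symm))

lemma ssne1' {m : ℕ} (k : Fin m) : (1 : Fin (m+1+1)) ≠ k.succ.succ := fun h => ssne1 k h.symm

lemma zne {m : ℕ} (k : Fin m) : (0 : Fin (m+1)) ≠ k.succ := (Fin.succ_ne_zero k).symm

lemma cases_one {m : ℕ} {α : Sort*} (h0 : α) (hs : Fin (m+1) → α) :
    (Fin.cases h0 (fun i => hs i) (1 : Fin (m+2)) : α) = hs 0 := by
  rw [← Fin.succ_zero_eq_one]
  exact Fin.cases_succ 0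

lemma hsq : Real.sqrt 2 * Real.sqrt 2 = 2 := Real.mul_self_sqrt (by norm_num)

lemma PPinv (n : ℕ) : Pmat n * Pinv n = 1 := by
  ext i j
  rw [Matrix.mul_apply, Fin.sum_univ_succ, Fin.sum_univ_succ]
  induction i using Fin.cases with
  | zero =>
    induction j using Fin.cases with
    | zero => simp [Pmat, Pinv, ssne1, ssne1', Fin.succ_ne_zero]; nlinarith [hsq]
    | succ j =>
      induction j using Fin.cases with
      | zero => simp [Pmat, Pinv, ssne1, ssne1', Fin.succ_ne_zero, Matrix.one_apply]; nlinarith [hsq]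
      | succ j => simp [Pmat, Pinv, ssne1, ssne1', Fin.succ_ne_zero,
          Matrix.one_apply, (Fin.succ_ne_zero j.succ).symm]
  | succ i =>
    induction i using Fin.cases with
    | zero =>
      induction j using Fin.cases with
      | zero => simp [Pmat, Pinv, ssne1, ssne1', Fin.succ_ne_zero, Matrix.one_apply]; nlinarith [hsq]
      | succ j =>
        induction j using Fin.cases with
        | zero => simp [Pmat, Pinv, ssne1, ssne1', Fin.succ_ne_zero, Matrix.one_apply]; nlinarith [hsq]
        | succ j => simp [Pmat, Pinv, ssne1, ssne1', Fin.succ_ne_zero,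
            Matrix.one_apply, (Fin.succ_ne_zero j.succ).symm]
    | succ i =>
      induction j using Fin.cases with
      | zero => simp [Pmat, Pinv, ssne1, ssne1', Fin.succ_ne_zero, Matrix.one_apply]
      | succ j =>
        induction j using Fin.cases with
        | zero => simp [Pmat, Pinv, ssne1, ssne1', Fin.succ_ne_zero, Matrix.one_apply,
            (Fin.succ_ne_zero i.succ)]
        | succ j => simp [Pmat, Pinv, ssne1, ssne1', Fin.succ_ne_zero, Matrix.one_apply,
            Fin.succ_inj, Finset.sum_ite_eq, Finset.sum_ite_eq']

lemma BP_eq (n : ℕ) (B : Matrix (Fin (n+2)) (Fin (n+2)) ℝ)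
    (hrow : ∀ j, B 0 j = B 1 j) (hcol : ∀ i, B i 0 = B i 1) :
    B * Pmat n = Pmat n * Dmat n B := by
  ext i j
  rw [Matrix.mul_apply, Matrix.mul_apply, Fin.sum_univ_succ, Fin.sum_univ_succ,
    Fin.sum_univ_succ, Fin.sum_univ_succ]
  induction j using Fin.cases with
  | zero =>
    simp [Pmat, Dmat, ssne1, ssne1', zne, Fin.succ_ne_zero, hcol, cases_one]
  | succ j =>
    induction j using Fin.cases with
    | zero =>
      induction i using Fin.cases with
      | zero =>
        simp [Pmat, Dmat, ssne1, ssne1', zne, Fin.succ_ne_zero, hrow, hcol, cases_one]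
        try ring
        all_goals (ring_nf; rw [Real.sq_sqrt (by norm_num : (0:ℝ) ≤ 2)]; try ring)
      | succ i =>
        induction i using Fin.cases with
        | zero =>
          simp [Pmat, Dmat, ssne1, ssne1', zne, Fin.succ_ne_zero, hrow, hcol, cases_one]
          try ring
          all_goals (ring_nf; rw [Real.sq_sqrt (by norm_num : (0:ℝ) ≤ 2)]; try ring)
        | succ i =>
          simp [Pmat, Dmat, ssne1, ssne1', zne, Fin.succ_ne_zero, hrow, hcol, cases_one,
            Fin.succ_inj]
          try ring
          all_goals (ring_nf; rw [Real.sq_sqrt (by norm_num : (0:ℝ) ≤ 2)]; try ring)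
    | succ j =>
      induction i using Fin.cases with
      | zero =>
        simp [Pmat, Dmat, ssne1, ssne1', zne, Fin.succ_ne_zero, hrow, hcol, cases_one,
          Fin.succ_inj]
        try ring
        all_goals (rw [Real.sq_sqrt (by norm_num : (0:ℝ) ≤ 2)]; ring)
      | succ i =>
        induction i using Fin.cases with
        | zero =>
          simp [Pmat, Dmat, ssne1, ssne1', zne, Fin.succ_ne_zero, hrow, hcol, cases_one,
            Fin.succ_inj]
          try ring
          all_goals (rw [Real.sq_sqrt (by norm_num : (0:ℝ) ≤ 2)]; ring)
        | succ i =>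
          simp [Pmat, Dmat, ssne1, ssne1', zne, Fin.succ_ne_zero, hrow, hcol, cases_one,
            Fin.succ_inj]
          try ring
          all_goals (ring_nf; rw [Real.sq_sqrt (by norm_num : (0:ℝ) ≤ 2)]; try ring)

lemma charpoly_conj_aux {m : Type*} [DecidableEq m] [Fintype m]
    (P B Pi : Matrix m m ℝ) (h : P * Pi = 1) :
    (Pi * B * P).charpoly = B.charpoly := by
  have h' : Pi * P = 1 := mul_eq_one_comm.mp h
  have hmap : (C : ℝ →+* ℝ[X]).mapMatrix Pi * (C : ℝ →+* ℝ[X]).mapMatrix P = 1 := by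
    rw [← _root_.map_mul, h', _root_.map_one]
  have key : charmatrix (Pi * B * P)
      = (C : ℝ →+* ℝ[X]).mapMatrix Pi * charmatrix B * (C : ℝ →+* ℝ[X]).mapMatrix P := by
    rw [charmatrix, charmatrix]
    rw [Matrix.mul_sub, Matrix.sub_mul]
    congr 1
    · rw [Matrix.mul_assoc, (Matrix.scalar_commute X (fun r => Commute.all X r) _).eq,
        ← Matrix.mul_assoc, hmap, one_mul]
    · rw [_root_.map_mul, _root_.map_mul, Matrix.mul_assoc]
  rw [Matrix.charpoly, key, det_mul, det_mul, Matrix.charpoly]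
  have hdet : ((C : ℝ →+* ℝ[X]).mapMatrix Pi).det * ((C : ℝ →+* ℝ[X]).mapMatrix P).det = 1 := by
    rw [← det_mul, hmap, det_one]
  calc ((C : ℝ →+* ℝ[X]).mapMatrix Pi).det * (charmatrix B).det * ((C : ℝ →+* ℝ[X]).mapMatrix P).det
      = (charmatrix B).det * (((C : ℝ →+* ℝ[X]).mapMatrix Pi).det * ((C : ℝ →+* ℝ[X]).mapMatrix P).det) := by ring
    _ = (charmatrix B).det := by rw [hdet, mul_one]

lemma charpoly_D (n : ℕ) (B : Matrix (Fin (n+2)) (Fin (n+2)) ℝ)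
    (h0 : ∀ j, B 0 j = 0) :
    B.charpoly = X * (B.submatrix Fin.succ Fin.succ).charpoly := by
  have hsub : (charmatrix B).submatrix Fin.succ Fin.succ
      = charmatrix (B.submatrix Fin.succ Fin.succ) := by
    ext i j
    by_cases h : i = j
    · subst h
      simp [charmatrix_apply_eq]
    · rw [Matrix.submatrix_apply, charmatrix_apply_ne _ _ _ (by simpa [Fin.succ_inj] using h),
        charmatrix_apply_ne _ _ _ h, Matrix.submatrix_apply]
  rw [Matrix.charpoly, Matrix.det_succ_row_zero, Fin.sum_univ_succ]
  simp only [charmatrix_apply_eq, charmatrix_apply_ne _ _ _ (Fin.succ_ne_zero _).symm]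
  rw [h0 0]
  simp [h0, Fin.succAbove_zero, hsub, Matrix.charpoly, charmatrix_apply_eq]

end EigAux

/-- If a symmetric matrix `B` has its first two rows (and columns) equal, then
`det B = 0` and, letting `B'` be `B` with the first row and column deleted and `B''`
be `B'` with its first row and column multiplied by `√2`, the eigenvalues of `B` are
those of `B''` together with `0`, and `det B'' = 2 det B'`. -/
theorem eigenvalues_of_repeated_row (n : ℕ) (B : Matrix (Fin (n + 2)) (Fin (n + 2)) ℝ)
    (hsym : B.IsSymm) (hrow : ∀ j, B 0 j = B 1 j) :
    B.det = 0 ∧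
    (let B' : Matrix (Fin (n + 1)) (Fin (n + 1)) ℝ := B.submatrix Fin.succ Fin.succ
     let B'' : Matrix (Fin (n + 1)) (Fin (n + 1)) ℝ :=
       Matrix.of fun i j =>
         (if i = 0 then Real.sqrt 2 else 1) * (if j = 0 then Real.sqrt 2 else 1) * B' i j
     B''.det = 2 * B'.det ∧ B.charpoly = Polynomial.X * B''.charpoly) := by
  have hcol : ∀ i, B i 0 = B i 1 := by
    intro i
    have h1 := congrFun (congrFun hsym 0) i
    have h2 := congrFun (congrFun hsym 1) i
    rw [Matrix.transpose_apply] at h1 h2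
    rw [h1, h2, hrow]
  set B' : Matrix (Fin (n + 1)) (Fin (n + 1)) ℝ := B.submatrix Fin.succ Fin.succ with hB'
  set B'' : Matrix (Fin (n + 1)) (Fin (n + 1)) ℝ :=
       Matrix.of fun i j =>
         (if i = 0 then Real.sqrt 2 else 1) * (if j = 0 then Real.sqrt 2 else 1) * B' i j with hB''
  have hdet : B.det = 0 := Matrix.det_zero_of_row_eq (by exact Fin.zero_ne_one) (funext hrow)
  -- det B'' = 2 det B'
  have hd : B'' = Matrix.diagonal (fun i => if i = 0 then Real.sqrt 2 else 1) * B'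
      * Matrix.diagonal (fun i => if i = 0 then Real.sqrt 2 else 1) := by
    ext i j
    rw [Matrix.mul_diagonal, Matrix.diagonal_mul, hB'']
    simp only [Matrix.of_apply]
    ring
  have hdet2 : B''.det = 2 * B'.det := by
    rw [hd, Matrix.det_mul, Matrix.det_mul, Matrix.det_diagonal]
    rw [show (∏ i : Fin (n+1), if i = 0 then Real.sqrt 2 else 1) = Real.sqrt 2 by
      simp [Finset.prod_ite_eq']]
    ring_nf
    rw [Real.sq_sqrt (by norm_num : (0:ℝ) ≤ 2)]
    ring
  -- charpoly
  have h1 : Pmat n * Pinv n = 1 := PPinv n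
  have h2 : Pinv n * Pmat n = 1 := mul_eq_one_comm.mp h1
  have hD : Dmat n B = Pinv n * B * Pmat n := by
    calc Dmat n B = 1 * Dmat n B := (one_mul _).symm
      _ = Pinv n * (Pmat n * Dmat n B) := by rw [← h2, Matrix.mul_assoc]
      _ = Pinv n * (B * Pmat n) := by rw [BP_eq n B hrow hcol]
      _ = Pinv n * B * Pmat n := by rw [Matrix.mul_assoc]
  have hcp : B.charpoly = (Dmat n B).charpoly := by
    rw [hD]
    exact (charpoly_conj_aux _ _ _ h1).symm
  have hD0 : ∀ j, Dmat n B 0 j = 0 := by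
    intro j
    simp [Dmat]
  have hsubD : (Dmat n B).submatrix Fin.succ Fin.succ = B'' := by
    ext i j
    simp [Dmat, hB'', hB']
  have hcp2 : B.charpoly = Polynomial.X * B''.charpoly := by
    rw [hcp, charpoly_D n _ hD0, hsubD]
  exact ⟨hdet, hdet2, hcp2⟩
end

section
/- Let K be the s×s tridiagonal matrix with diagonal (3, 2, 2, ..., 2, 1) and all super- and sub-diagonal entries equal to 1. Then the eigenvalues of K are 2 + 2·cos((2j-1)π/(2s)) for j = 1, ..., s. -/
private lemma ct_first (u : ℝ) :
    3 * Real.cos u + Real.cos (3 * u) = (2 + 2 * Real.cos (2 * u)) * Real.cos u := by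
  rw [show (3:ℝ) * u = 2*u + u by ring, Real.cos_add, Real.cos_two_mul, Real.sin_two_mul]
  linear_combination (-2 * Real.cos u) * Real.sin_sq_add_cos_sq u

private lemma ct_mid (x t : ℝ) :
    Real.cos (x - t) + 2 * Real.cos x + Real.cos (x + t)
      = (2 + 2 * Real.cos t) * Real.cos x := by
  rw [Real.cos_sub, Real.cos_add]; ring

private lemma ct_last (y u : ℝ) (hy : Real.cos y = 0) :
    Real.cos (y - 3*u) + Real.cos (y - u) = (2 + 2 * Real.cos (2*u)) * Real.cos (y - u) := by
  rw [Real.cos_sub, Real.cos_sub, hy, show (3:ℝ)*u = 2*u + u by ring,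
    Real.sin_add, Real.sin_two_mul, Real.cos_two_mul]
  ring


private lemma row_first (t : ℝ) :
    3 * Real.cos ((0 + 1/2) * t) + 1 * Real.cos ((1 + 1/2) * t)
      = (2 + 2 * Real.cos t) * Real.cos ((0 + 1/2) * t) := by
  have h := ct_first (t/2)
  rw [show 3*(t/2) = (1+1/2)*t by ring, show 2*(t/2) = t by ring,
    show t/2 = (0+1/2)*t by ring] at h
  linear_combination h

private lemma row_mid (n t : ℝ) :
    1 * Real.cos ((n - 1 + 1/2) * t) + 2 * Real.cos ((n + 1/2) * t)
      + 1 * Real.cos ((n + 1 + 1/2) * t)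
      = (2 + 2 * Real.cos t) * Real.cos ((n + 1/2) * t) := by
  rw [show (n-1+1/2)*t = (n+1/2)*t - t by ring, show (n+1+1/2)*t = (n+1/2)*t + t by ring,
    Real.cos_sub, Real.cos_add]
  ring

private lemma row_last (m t : ℝ) (hc : Real.cos ((m+1)*t) = 0) :
    1 * Real.cos ((m - 1 + 1/2) * t) + 1 * Real.cos ((m + 1/2) * t)
      = (2 + 2 * Real.cos t) * Real.cos ((m + 1/2) * t) := by
  have h := ct_last ((m+1)*t) (t/2) hc
  rw [show (m+1)*t - 3*(t/2) = (m-1+1/2)*t by ring, show (m+1)*t - t/2 = (m+1/2)*t by ring,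
    show 2*(t/2) = t by ring] at h
  linear_combination h

private lemma eval_cp {s : ℕ} (M : Matrix (Fin s) (Fin s) ℝ) (x : ℝ) :
    M.charpoly.eval x = (Matrix.diagonal (fun _ => x) - M).det := by
  rw [Matrix.charpoly, ← Polynomial.coe_evalRingHom, RingHom.map_det]
  congr 1
  ext i j
  by_cases h : i = j
  · subst h
    simp [Matrix.charmatrix_apply_eq]
  · simp [Matrix.charmatrix_apply_ne _ _ _ h, Matrix.diagonal_apply_ne _ h]

/-- The eigenvalues of the `s × s` tridiagonal matrix with diagonal `(3, 2, …, 2, 1)` and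
all super- and sub-diagonal entries `1` are `2 + 2 cos((2j-1)π/(2s))` for `j = 1, …, s`. -/
theorem eigenvalues_tridiagK (s : ℕ) (hs : 1 ≤ s) (K : Matrix (Fin s) (Fin s) ℝ)
    (hfirst : ∀ i : Fin s, (i : ℕ) = 0 → K i i = 3)
    (hlast : ∀ i : Fin s, (i : ℕ) = s - 1 → K i i = 1)
    (hmid : ∀ i : Fin s, (i : ℕ) ≠ 0 → (i : ℕ) ≠ s - 1 → K i i = 2)
    (hoff : ∀ i j : Fin s, (i : ℕ) + 1 = j → K i j = 1 ∧ K j i = 1)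
    (hzero : ∀ i j : Fin s, (i : ℕ) ≠ j → (i : ℕ) + 1 ≠ j → (j : ℕ) + 1 ≠ i → K i j = 0) :
    K.charpoly =
      ∏ j ∈ Finset.range s,
        (Polynomial.X - Polynomial.C
          (2 + 2 * Real.cos ((2 * (j : ℝ) + 1) * Real.pi / (2 * (s : ℝ))))) := by
  classical
  rcases eq_or_lt_of_le hs with h1 | h2
  · -- s = 1 : hypotheses are contradictory
    exfalso
    have hA := hfirst ⟨0, hs⟩ rfl
    have hB := hlast ⟨0, hs⟩ (by omega)
    rw [hA] at hB
    norm_num at hB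
  -- now 2 ≤ s
  have hs2 : 2 ≤ s := h2
  have hsR : (0:ℝ) < (s:ℝ) := by positivity
  set θ : ℕ → ℝ := fun j => (2 * (j : ℝ) + 1) * Real.pi / (2 * (s : ℝ)) with hθ
  set lam : ℕ → ℝ := fun j => 2 + 2 * Real.cos (θ j) with hlam
  have hθmem : ∀ j < s, 0 < θ j ∧ θ j < Real.pi := by
    intro j hj
    have hπ := Real.pi_pos
    constructor
    · apply div_pos (by positivity) (by positivity)
    · rw [hθ, div_lt_iff₀ (by positivity)]
      have : (2 * (j:ℝ) + 1) < 2 * (s:ℝ) := by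
        have : (j:ℝ) + 1 ≤ (s:ℝ) := by exact_mod_cast hj
        linarith
      nlinarith
  -- injectivity
  have hinj : Set.InjOn lam (Finset.range s : Set ℕ) := by
    intro a ha b hb hab
    simp only [Finset.coe_range, Set.mem_Iio] at ha hb
    have hca : Real.cos (θ a) = Real.cos (θ b) := by
      simp only [hlam] at hab; linarith
    have h1 := hθmem a ha
    have h2 := hθmem b hb
    have := Real.injOn_cos ⟨le_of_lt h1.1, le_of_lt h1.2⟩ ⟨le_of_lt h2.1, le_of_lt h2.2⟩ hca
    rw [hθ] at this
    field_simp at this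
    exact_mod_cast (show (a:ℝ) = b by linarith)
  -- each lam j is a root of the charpoly
  have hroot : ∀ j < s, K.charpoly.eval (lam j) = 0 := by
    intro j hj
    rw [eval_cp]
    rw [← Matrix.exists_mulVec_eq_zero_iff]
    have hcs : Real.cos ((s:ℝ) * θ j) = 0 := by
      have he : (s:ℝ) * θ j = (j:ℝ) * Real.pi + Real.pi / 2 := by
        rw [hθ]; field_simp
      simp [he, Real.cos_add_pi_div_two, Real.sin_nat_mul_pi]
    set v : Fin s → ℝ := fun k => Real.cos (((k:ℕ) + 1/2) * θ j) with hv
    refine ⟨v, ?_, ?_⟩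
    · -- v ≠ 0
      intro hv0
      have h0 := congrFun hv0 ⟨0, hs⟩
      have hpos : 0 < Real.cos (((0:ℕ) + 1/2) * θ j) := by
        apply Real.cos_pos_of_mem_Ioo
        constructor
        · have := (hθmem j hj).1
          have hπ := Real.pi_pos
          push_cast
          nlinarith
        · have := (hθmem j hj).2
          have := (hθmem j hj).1
          push_cast
          nlinarith
      rw [hv] at h0
      simp only [Pi.zero_apply] at h0
      rw [h0] at hpos
      norm_num at hpos
    · -- eigen equation
      have hsum : ∀ i : Fin s, ∑ k, K i k * v k = lam j * v i := by
        intro i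
        have hiv := i.2
        by_cases hb0 : (i : ℕ) = 0
        · -- first row
          have hT : ∑ k ∈ ({⟨0, by omega⟩, ⟨1, by omega⟩} : Finset (Fin s)), K i k * v k
              = ∑ k, K i k * v k := by
            apply Finset.sum_subset (Finset.subset_univ _)
            intro k _ hk
            simp only [Finset.mem_insert, Finset.mem_singleton, Fin.ext_iff] at hk
            push_neg at hk
            rw [hzero i k (by omega) (by omega) (by omega)]
            ring
          rw [← hT]
          have hi0 : i = ⟨0, by omega⟩ := by rw [Fin.ext_iff]; exact hb0
          have hK0 : K i ⟨0, by omega⟩ = 3 := by rw [← hi0]; exact hfirst i hb0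
          have hK1 : K i ⟨1, by omega⟩ = 1 :=
            (hoff i ⟨1, by omega⟩ (by rw [hb0])).1
          rw [Finset.sum_insert (by simp [Fin.ext_iff]), Finset.sum_singleton, hK0, hK1,
            hi0, hv, hlam]
          simp only
          push_cast
          exact row_first (θ j)
        · by_cases hbl : (i : ℕ) = s - 1
          · -- last row
            have h1i : 1 ≤ (i : ℕ) := by omega
            have hT : ∑ k ∈ ({⟨(i:ℕ) - 1, by omega⟩, i} : Finset (Fin s)), K i k * v k
                = ∑ k, K i k * v k := by
              apply Finset.sum_subset (Finset.subset_univ _)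
              intro k _ hk
              simp only [Finset.mem_insert, Finset.mem_singleton, Fin.ext_iff] at hk
              push_neg at hk
              rw [hzero i k (by omega) (by omega) (by omega)]
              ring
            rw [← hT]
            have hKm : K i ⟨(i:ℕ) - 1, by omega⟩ = 1 :=
              (hoff ⟨(i:ℕ) - 1, by omega⟩ i (by simp; omega)).2
            have hKi : K i i = 1 := hlast i hbl
            rw [Finset.sum_insert (by simp [Fin.ext_iff] <;> omega), Finset.sum_singleton,
              hKm, hKi, hv, hlam]
            simp only
            rw [Nat.cast_sub h1i, Nat.cast_one]
            refine row_last ((i:ℕ) : ℝ) (θ j) ?_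
            have hm1 : (((i:ℕ) : ℝ) + 1) = (s : ℝ) := by
              rw [hbl]
              rw [Nat.cast_sub hs, Nat.cast_one]
              ring
            rw [hm1]
            exact hcs
          · -- middle row
            have h1i : 1 ≤ (i : ℕ) := by omega
            have hip : (i : ℕ) + 1 < s := by omega
            have hT : ∑ k ∈ ({⟨(i:ℕ) - 1, by omega⟩, i, ⟨(i:ℕ) + 1, hip⟩} : Finset (Fin s)),
                K i k * v k = ∑ k, K i k * v k := by
              apply Finset.sum_subset (Finset.subset_univ _)
              intro k _ hk
              simp only [Finset.mem_insert, Finset.mem_singleton, Fin.ext_iff] at hk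
              push_neg at hk
              rw [hzero i k (by omega) (by omega) (by omega)]
              ring
            rw [← hT]
            have hKm : K i ⟨(i:ℕ) - 1, by omega⟩ = 1 :=
              (hoff ⟨(i:ℕ) - 1, by omega⟩ i (by simp; omega)).2
            have hKi : K i i = 2 := hmid i hb0 hbl
            have hKp : K i ⟨(i:ℕ) + 1, hip⟩ = 1 := (hoff i ⟨(i:ℕ) + 1, hip⟩ rfl).1
            rw [Finset.sum_insert (by simp [Fin.ext_iff] <;> omega),
              Finset.sum_insert (by simp [Fin.ext_iff] <;> omega), Finset.sum_singleton,
              hKm, hKi, hKp, hv, hlam]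
            simp only
            rw [Nat.cast_sub h1i, Nat.cast_one, Nat.cast_add, Nat.cast_one]
            linear_combination row_mid ((i:ℕ) : ℝ) (θ j)
      funext i
      rw [Matrix.sub_mulVec]
      simp only [Matrix.mulVec, dotProduct, Pi.sub_apply, Pi.zero_apply]
      rw [hsum i]
      have : ∑ k, Matrix.diagonal (fun _ => lam j) i k * v k = lam j * v i := by
        rw [Finset.sum_eq_single i]
        · simp
        · intro b _ hb; rw [Matrix.diagonal_apply_ne _ (Ne.symm hb)]; ring
        · intro h; exact absurd (Finset.mem_univ i) h
      rw [this]; ring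
  -- assemble
  set P : Polynomial ℝ := ∏ j ∈ Finset.range s,
      (Polynomial.X - Polynomial.C (lam j)) with hP
  have hmP : P.Monic := Polynomial.monic_prod_of_monic _ _ fun j _ => Polynomial.monic_X_sub_C _
  have hdP : P.natDegree = s := by
    rw [hP, Polynomial.natDegree_prod _ _ fun j _ => Polynomial.X_sub_C_ne_zero (lam j)]
    simp
  have hmp : K.charpoly.Monic := K.charpoly_monic
  have hdp : K.charpoly.natDegree = s := by
    rw [Matrix.charpoly_natDegree_eq_dim]; simp
  have hsub : K.charpoly - P = 0 := by
    by_cases hd : K.charpoly - P = 0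
    · exact hd
    apply Polynomial.eq_zero_of_natDegree_lt_card_of_eval_eq_zero' _
      ((Finset.range s).image lam)
    · intro x hx
      obtain ⟨j, hj, rfl⟩ := Finset.mem_image.mp hx
      rw [Polynomial.eval_sub, hroot j (Finset.mem_range.mp hj)]
      rw [hP, Polynomial.eval_prod]
      rw [Finset.prod_eq_zero hj (by simp)]
      ring
    · rw [Finset.card_image_of_injOn hinj, Finset.card_range]
      have hdeg : (K.charpoly - P).degree < (s : ℕ) := by
        have e1 : K.charpoly.degree = (s:ℕ) := by
          rw [Polynomial.degree_eq_natDegree hmp.ne_zero, hdp]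
        have e2 : P.degree = (s:ℕ) := by
          rw [Polynomial.degree_eq_natDegree hmP.ne_zero, hdP]
        have := Polynomial.degree_sub_lt (e1.trans e2.symm) hmp.ne_zero
          (by simp [hmp.leadingCoeff, hmP.leadingCoeff])
        rwa [e1] at this
      exact (Polynomial.natDegree_lt_iff_degree_lt hd).mpr hdeg
  have := sub_eq_zero.mp hsub
  rw [this, hP]
end
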